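/- Let n_1 > n_2 > ⋯ > n_r ≥ 1 be pairwise distinct positive integers and let R be a Lie subalgebra of the block-diagonal Lie algebra ⊕_{j=1}^r su(n_j) ⊆ su(n_1 + ⋯ + n_r) (matrices diag(A_1,…,A_r) with A_j ∈ su(n_j)). Suppose R is 'weakly subspace controllable': for every j and every Z ∈ su(n_j) there exists an element of R whose j-th block equals Z. Then R = ⊕_{j=1}^r su(n_j). -/

import Mathlib

open scoped Matrix
open Matrix

attribute [local instance 100] LieRing.ofAssociativeRing

namespace Stmt13



variable {m : ℕ}

lemma EXE {p q : Fin m} (X : Matrix (Fin m) (Fin m) ℂ) :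
    single p q (1:ℂ) * X * single p q 1 = (X q p) • single p q 1 := by
  ext a b
  by_cases hb : b = q
  · rw [hb, mul_single_apply_same]
    by_cases ha : a = p
    · rw [ha]; simp
    · rw [single_mul_apply_of_ne _ _ _ _ _ ha]
      simp [Matrix.smul_apply, Matrix.single_apply_of_row_ne (Ne.symm ha)]
  · rw [mul_single_apply_of_ne _ _ _ _ _ hb]
    simp [Matrix.smul_apply, Matrix.single_apply_of_col_ne _ _ (Ne.symm hb)]

lemma ad2 {p q : Fin m} (hpq : p ≠ q) (X : Matrix (Fin m) (Fin m) ℂ) :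
    single p q (1:ℂ) * (single p q (1:ℂ) * X - X * single p q (1:ℂ))
      - (single p q (1:ℂ) * X - X * single p q (1:ℂ)) * single p q (1:ℂ)
      = (-(2 * X q p)) • single p q (1:ℂ) := by
  have h0 : single p q (1:ℂ) * single p q (1:ℂ) = 0 :=
    single_mul_single_of_ne _ _ _ _ (Ne.symm hpq) _
  have h1 := EXE (p := p) (q := q) X
  rw [mul_sub, sub_mul, ← mul_assoc, h0, ← mul_assoc, mul_assoc X _ _, h0, h1]
  simp only [zero_mul, mul_zero, smul_mul_assoc, h0, smul_zero]
  ext a b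
  simp only [Matrix.sub_apply, Matrix.zero_apply, Matrix.smul_apply, smul_eq_mul]
  ring

variable {m : ℕ}


section Wsec
variable {W : Submodule ℂ (Matrix (Fin m) (Fin m) ℂ)}
  (hW : ∀ Y : Matrix (Fin m) (Fin m) ℂ, Y.trace = 0 → ∀ X ∈ W, Y * X - X * Y ∈ W)

include hW

lemma step_entry {X : Matrix (Fin m) (Fin m) ℂ} (hX : X ∈ W) {p q : Fin m} (hpq : p ≠ q) :
    (X q p) • single p q (1:ℂ) ∈ W := by
  have htr : (single p q (1:ℂ)).trace = 0 :=
    trace_single_eq_of_ne _ _ _ hpq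
  have h1 := hW _ htr X hX
  have h2 := hW _ htr _ h1
  rw [ad2 hpq] at h2
  have := W.smul_mem (-(1/2 : ℂ)) h2
  rw [smul_smul] at this
  convert this using 2
  ring

lemma step_E {X : Matrix (Fin m) (Fin m) ℂ} (hX : X ∈ W) {p q : Fin m} (hpq : p ≠ q)
    (hne : X q p ≠ 0) : single p q (1:ℂ) ∈ W := by
  have := W.smul_mem (X q p)⁻¹ (step_entry hW hX hpq)
  rwa [smul_smul, inv_mul_cancel₀ hne, one_smul] at this

lemma exists_E (hm : 2 ≤ m) {X₀ : Matrix (Fin m) (Fin m) ℂ} (hX₀ : X₀ ∈ W)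
    (hsc : ∀ c : ℂ, X₀ ≠ c • (1 : Matrix (Fin m) (Fin m) ℂ)) :
    ∃ p q : Fin m, p ≠ q ∧ single p q (1:ℂ) ∈ W := by
  by_cases hoff : ∃ X ∈ W, ∃ p q : Fin m, p ≠ q ∧ X q p ≠ 0
  · obtain ⟨X, hX, p, q, hpq, hne⟩ := hoff
    exact ⟨p, q, hpq, step_E hW hX hpq hne⟩
  push_neg at hoff
  exfalso
  have hoffd : ∀ X ∈ W, ∀ a b : Fin m, a ≠ b → X a b = 0 := by
    intro X hX a b hab
    exact hoff X hX b a (Ne.symm hab)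
  have hdiag : ∀ p q : Fin m, X₀ p p = X₀ q q := by
    intro p q
    by_contra hne
    have hpq : p ≠ q := by rintro rfl; exact hne rfl
    have htr : (single p q (1:ℂ)).trace = 0 :=
      trace_single_eq_of_ne _ _ _ hpq
    have hY := hW _ htr X₀ hX₀
    have h0 := hoffd _ hY p q hpq
    rw [Matrix.sub_apply, single_mul_apply_same,
      mul_single_apply_same, one_mul, mul_one, sub_eq_zero] at h0
    exact hne (h0.symm)
  obtain ⟨a0⟩ : Nonempty (Fin m) := ⟨⟨0, by omega⟩⟩
  apply hsc (X₀ a0 a0)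
  ext a b
  by_cases hab : a = b
  · subst hab
    simp [Matrix.one_apply, hdiag a a0]
  · simp [Matrix.one_apply, hab, hoffd _ hX₀ a b hab]

lemma sl_sub_W (hm : 2 ≤ m) {X₀ : Matrix (Fin m) (Fin m) ℂ} (hX₀ : X₀ ∈ W)
    (hsc : ∀ c : ℂ, X₀ ≠ c • (1 : Matrix (Fin m) (Fin m) ℂ)) :
    ∀ Z : Matrix (Fin m) (Fin m) ℂ, Z.trace = 0 → Z ∈ W := by
  obtain ⟨p, q, hpq, hEpq⟩ := exists_E hW hm hX₀ hsc
  -- claimC : from E s t ∈ W get all E a t, a ≠ t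
  have claimC : ∀ s t : Fin m, s ≠ t → single s t (1:ℂ) ∈ W →
      ∀ a, a ≠ t → single a t (1:ℂ) ∈ W := by
    intro s t hst hEst a hat
    by_cases has : a = s
    · rwa [has]
    have htr : (single a s (1:ℂ)).trace = 0 :=
      trace_single_eq_of_ne _ _ _ has
    have h := hW _ htr _ hEst
    rw [single_mul_single_same, single_mul_single_of_ne _ _ _ _ (Ne.symm hat) _, one_mul, sub_zero] at h
    exact h
  have claimR : ∀ s t : Fin m, s ≠ t → single s t (1:ℂ) ∈ W →
      ∀ b, b ≠ s → single s b (1:ℂ) ∈ W := by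
    intro s t hst hEst b hbs
    by_cases hbt : b = t
    · rwa [hbt]
    have htr : (single t b (1:ℂ)).trace = 0 :=
      trace_single_eq_of_ne _ _ _ (Ne.symm hbt)
    have h := hW _ htr _ hEst
    rw [single_mul_single_of_ne _ _ _ _ hbs _, single_mul_single_same, one_mul, zero_sub] at h
    simpa using W.neg_mem h
  -- E q p ∈ W via diagonal trick
  have hEqp : single q p (1:ℂ) ∈ W := by
    have htr : (single q p (1:ℂ)).trace = 0 :=
      trace_single_eq_of_ne _ _ _ (Ne.symm hpq)
    have hD := hW _ htr _ hEpq
    rw [single_mul_single_same, single_mul_single_same, one_mul] at hD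
    have h2 := hW _ htr _ hD
    rw [mul_sub, sub_mul, single_mul_single_of_ne _ _ _ _ hpq _, single_mul_single_same,
      single_mul_single_same, single_mul_single_of_ne _ _ _ _ hpq _, mul_one,
      zero_sub, sub_zero] at h2
    have h3 := W.smul_mem (-(1/2) : ℂ) h2
    convert h3 using 1
    ext a b
    simp only [Matrix.smul_apply, Matrix.sub_apply, Matrix.neg_apply, smul_eq_mul]
    ring
  -- all off-diagonal E's
  have hE : ∀ a b : Fin m, a ≠ b → single a b (1:ℂ) ∈ W := by
    intro a b hab
    by_cases hbq : b = q
    · rw [hbq]; rw [hbq] at hab; exact claimC p q hpq hEpq a hab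
    by_cases haq : a = q
    · rw [haq]; rw [haq] at hab; exact claimR q p (Ne.symm hpq) hEqp b (Ne.symm hab)
    · have h1 := claimC p q hpq hEpq a haq
      exact claimR a q haq h1 b (Ne.symm hab)
  -- diagonal differences
  have hD : ∀ a b : Fin m, a ≠ b →
      single a a (1:ℂ) - single b b (1:ℂ) ∈ W := by
    intro a b hab
    have htr : (single a b (1:ℂ)).trace = 0 :=
      trace_single_eq_of_ne _ _ _ hab
    have h := hW _ htr _ (hE b a (Ne.symm hab))
    rwa [single_mul_single_same, single_mul_single_same, one_mul] at h
  -- conclude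
  intro Z hZ
  obtain ⟨a0⟩ : Nonempty (Fin m) := ⟨⟨0, by omega⟩⟩
  have hrep : Z = ∑ a : Fin m, ∑ b : Fin m,
      (if a = b then Z a a • (single a a (1:ℂ) - single a0 a0 (1:ℂ))
       else Z a b • single a b (1:ℂ)) := by
    have base := matrix_eq_sum_single Z
    have hterm : ∀ a b : Fin m,
        (if a = b then Z a a • (single a a (1:ℂ) - single a0 a0 (1:ℂ))
         else Z a b • single a b (1:ℂ))
        = Z a b • single a b (1:ℂ)
          - (if a = b then Z a a • single a0 a0 (1:ℂ) else 0) := by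
      intro a b
      by_cases hab : a = b
      · subst hab; simp [smul_sub]
      · simp [hab]
    calc Z = ∑ a : Fin m, ∑ b : Fin m, Z a b • single a b (1:ℂ) := by
            conv_lhs => rw [base]
            refine Finset.sum_congr rfl fun a _ => Finset.sum_congr rfl fun b _ => ?_
            rw [smul_single, smul_eq_mul, mul_one]
      _ = _ := by
            rw [Finset.sum_congr rfl fun a _ => Finset.sum_congr rfl fun b _ => hterm a b]
            rw [Finset.sum_congr rfl fun a (_ : a ∈ Finset.univ) =>
              (Finset.sum_sub_distrib (s := Finset.univ) (fun b => Z a b • single a b (1:ℂ))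
                  (fun b => if a = b then Z a a • single a0 a0 (1:ℂ) else 0))]
            rw [Finset.sum_sub_distrib]
            have : ∑ a : Fin m, ∑ b : Fin m,
                (if a = b then Z a a • single a0 a0 (1:ℂ) else 0)
                = Z.trace • single a0 a0 (1:ℂ) := by
              rw [Matrix.trace]
              rw [Finset.sum_smul]
              refine Finset.sum_congr rfl fun a _ => ?_
              rw [Finset.sum_ite_eq Finset.univ a (fun _ => Z a a • single a0 a0 (1:ℂ))]
              simp [Matrix.diag]
            rw [this, hZ, zero_smul, sub_zero]
  rw [hrep]
  refine Submodule.sum_mem _ fun a _ => Submodule.sum_mem _ fun b _ => ?_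
  by_cases hab : a = b
  · subst hab
    simp only [if_pos rfl]
    by_cases ha0 : a = a0
    · subst ha0; simp
    · exact W.smul_mem _ (hD a a0 ha0)
  · simp only [if_neg hab]
    exact W.smul_mem _ (hE a b hab)

variable {m : ℕ}

end Wsec

noncomputable def su (m : ℕ) : Submodule ℝ (Matrix (Fin m) (Fin m) ℂ) where
  carrier := {X | Xᴴ = -X ∧ X.trace = 0}
  add_mem' := by
    rintro a b ⟨ha1, ha2⟩ ⟨hb1, hb2⟩
    refine ⟨?_, by rw [trace_add, ha2, hb2, add_zero]⟩
    rw [conjTranspose_add, ha1, hb1, neg_add]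
  zero_mem' := ⟨by simp, by simp⟩
  smul_mem' := by
    rintro c x ⟨h1, h2⟩
    refine ⟨?_, by rw [trace_smul, h2, smul_zero]⟩
    rw [conjTranspose_smul, h1, star_trivial, smul_neg]

lemma mem_su {X : Matrix (Fin m) (Fin m) ℂ} : X ∈ su m ↔ Xᴴ = -X ∧ X.trace = 0 := Iff.rfl

lemma skew_unique {A B : Matrix (Fin m) (Fin m) ℂ} (hA : Aᴴ = -A) (hB : Bᴴ = -B)
    (h : A + Complex.I • B = 0) : A = 0 ∧ B = 0 := by
  have hct : (A + Complex.I • B)ᴴ = 0 := by rw [h]; simp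
  rw [conjTranspose_add, conjTranspose_smul, hA, hB, Complex.star_def, Complex.conj_I,
    neg_smul, smul_neg, neg_neg] at hct
  have hB0 : B = 0 := by
    have h3 : Complex.I • B + Complex.I • B = 0 := by
      calc Complex.I • B + Complex.I • B = (A + Complex.I • B) + (-A + Complex.I • B) := by abel
        _ = 0 := by rw [h, hct, add_zero]
    have h4 : (2 : ℂ) • (Complex.I • B) = 0 := by rw [two_smul]; exact h3
    rcases smul_eq_zero.mp h4 with h' | h'
    · exact absurd h' two_ne_zero
    rcases smul_eq_zero.mp h' with h'' | h''
    · exact absurd h'' Complex.I_ne_zero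
    · exact h''
  refine ⟨?_, hB0⟩
  rw [hB0, smul_zero, add_zero] at h
  exact h

lemma sl_decomp (Y : Matrix (Fin m) (Fin m) ℂ) (hY : Y.trace = 0) :
    ∃ A B, A ∈ su m ∧ B ∈ su m ∧ Y = A + Complex.I • B := by
  refine ⟨(2:ℂ)⁻¹ • (Y - Yᴴ), (-(Complex.I) * (2:ℂ)⁻¹) • (Y + Yᴴ), ⟨?_, ?_⟩, ⟨?_, ?_⟩, ?_⟩
  · ext i j
    have s2 : star ((2:ℂ)⁻¹) = 2⁻¹ := by
      rw [star_inv₀]; norm_num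
    simp only [conjTranspose_apply, Matrix.smul_apply, Matrix.sub_apply, Matrix.neg_apply,
      smul_eq_mul, star_mul', star_sub, star_star, s2]
    ring
  · rw [trace_smul, trace_sub, trace_conjTranspose, hY]
    simp
  · ext i j
    have s2 : star ((2:ℂ)⁻¹) = 2⁻¹ := by
      rw [star_inv₀]; norm_num
    have sI : star Complex.I = -Complex.I := by
      simp [Complex.star_def, Complex.conj_I]
    simp only [conjTranspose_apply, Matrix.smul_apply, Matrix.add_apply, Matrix.neg_apply,
      smul_eq_mul, star_mul', star_add, star_neg, star_star, s2, sI]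
    ring
  · rw [trace_smul, trace_add, trace_conjTranspose, hY]
    simp
  · ext i j
    simp only [Matrix.add_apply, Matrix.smul_apply, Matrix.sub_apply, Matrix.conjTranspose_apply,
      smul_eq_mul]
    ring_nf
    rw [Complex.I_sq]
    ring

lemma su_scalar_zero (hm : 1 ≤ m) {X : Matrix (Fin m) (Fin m) ℂ} (hX : X ∈ su m) (c : ℂ)
    (hc : X = c • (1 : Matrix (Fin m) (Fin m) ℂ)) : X = 0 := by
  have htr := hX.2
  rw [hc, trace_smul, trace_one, smul_eq_mul] at htr
  have hc0 : c = 0 := by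
    rcases mul_eq_zero.mp htr with h | h
    · exact h
    · exfalso
      have hne : (Fintype.card (Fin m) : ℂ) ≠ 0 := by
        simp only [Fintype.card_fin]
        exact_mod_cast Nat.cast_ne_zero.mpr (by omega)
      exact hne h
  rw [hc, hc0, zero_smul]

variable {m : ℕ}


/-- Simplicity of su(m), in the concrete form we need. -/
lemma su_simple (hm : 2 ≤ m) (I : Submodule ℝ (Matrix (Fin m) (Fin m) ℂ))
    (hIsu : ∀ X ∈ I, X ∈ su m)
    (hideal : ∀ Y ∈ su m, ∀ X ∈ I, Y * X - X * Y ∈ I)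
    {X₀ : Matrix (Fin m) (Fin m) ℂ} (hX₀ : X₀ ∈ I) (hX₀ne : X₀ ≠ 0) :
    ∀ Z ∈ su m, Z ∈ I := by
  set W : Submodule ℂ (Matrix (Fin m) (Fin m) ℂ) := Submodule.span ℂ (I : Set _) with hWdef
  have hIW : ∀ X ∈ I, X ∈ W := fun X hX => Submodule.subset_span hX
  have hW : ∀ Y : Matrix (Fin m) (Fin m) ℂ, Y.trace = 0 → ∀ X ∈ W, Y * X - X * Y ∈ W := by
    intro Y hY X hX
    obtain ⟨A, B, hA, hB, rfl⟩ := sl_decomp Y hY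
    induction hX using Submodule.span_induction with
    | mem x hx =>
        have h1 : A * x - x * A ∈ W := hIW _ (hideal A hA x hx)
        have h2 : B * x - x * B ∈ W := hIW _ (hideal B hB x hx)
        have : (A + Complex.I • B) * x - x * (A + Complex.I • B)
            = (A * x - x * A) + Complex.I • (B * x - x * B) := by
          rw [add_mul, mul_add, smul_mul_assoc, mul_smul_comm, smul_sub]
          abel
        rw [this]
        exact W.add_mem h1 (W.smul_mem _ h2)
    | zero => simpa using W.zero_mem
    | add x y _ _ hx hy =>
        have : (A + Complex.I • B) * (x + y) - (x + y) * (A + Complex.I • B)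
            = ((A + Complex.I • B) * x - x * (A + Complex.I • B))
              + ((A + Complex.I • B) * y - y * (A + Complex.I • B)) := by
          rw [mul_add, add_mul x y]; abel
        rw [this]
        exact W.add_mem hx hy
    | smul c x _ hx =>
        have : (A + Complex.I • B) * (c • x) - (c • x) * (A + Complex.I • B)
            = c • ((A + Complex.I • B) * x - x * (A + Complex.I • B)) := by
          rw [mul_smul_comm, smul_mul_assoc, smul_sub]
        rw [this]
        exact W.smul_mem _ hx
  have hsc : ∀ c : ℂ, X₀ ≠ c • (1 : Matrix (Fin m) (Fin m) ℂ) := by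
    intro c hc
    exact hX₀ne (su_scalar_zero (by omega) (hIsu _ hX₀) c hc)
  have hsl := sl_sub_W hW hm (hIW _ hX₀) hsc
  intro Z hZ
  have hZW : Z ∈ W := hsl Z (mem_su.mp hZ).2
  -- every element of W is of the form A + I • B with A B ∈ I
  have hrep : ∀ X ∈ W, ∃ A ∈ I, ∃ B ∈ I, X = A + Complex.I • B := by
    intro X hX
    induction hX using Submodule.span_induction with
    | mem x hx => exact ⟨x, hx, 0, I.zero_mem, by simp⟩
    | zero => exact ⟨0, I.zero_mem, 0, I.zero_mem, by simp⟩
    | add x y _ _ hx hy =>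
        obtain ⟨A1, hA1, B1, hB1, rfl⟩ := hx
        obtain ⟨A2, hA2, B2, hB2, rfl⟩ := hy
        exact ⟨A1 + A2, I.add_mem hA1 hA2, B1 + B2, I.add_mem hB1 hB2, by
          rw [smul_add]; abel⟩
    | smul c x _ hx =>
        obtain ⟨A, hA, B, hB, rfl⟩ := hx
        refine ⟨c.re • A - c.im • B, I.sub_mem (I.smul_mem _ hA) (I.smul_mem _ hB),
          c.im • A + c.re • B, I.add_mem (I.smul_mem _ hA) (I.smul_mem _ hB), ?_⟩
        ext i j
        simp only [Matrix.add_apply, Matrix.sub_apply, Matrix.smul_apply, smul_eq_mul,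
          Complex.real_smul]
        have := Complex.re_add_im c
        linear_combination (A i j + Complex.I * B i j) * this.symm +
          ((c.im : ℂ) * B i j) * Complex.I_sq
  obtain ⟨A, hA, B, hB, hZeq⟩ := hrep Z hZW
  have hAs := (mem_su.mp (hIsu _ hA)).1
  have hBs := (mem_su.mp (hIsu _ hB)).1
  have hZs := (mem_su.mp hZ).1
  have : (A - Z) + Complex.I • B = 0 := by rw [sub_add_eq_add_sub, ← hZeq, sub_self]
  have hu := skew_unique (by rw [conjTranspose_sub, hAs, hZs]; abel) hBs this
  rw [(sub_eq_zero.mp hu.1).symm]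
  exact hA



lemma finrank_su (hm : 1 ≤ m) : Module.finrank ℝ (su m) = m * m - 1 := by
  set sl : Submodule ℂ (Matrix (Fin m) (Fin m) ℂ) :=
    LinearMap.ker (Matrix.traceLinearMap (Fin m) ℂ ℂ) with hsl
  have hsurj : LinearMap.range (Matrix.traceLinearMap (Fin m) ℂ ℂ) = ⊤ := by
    rw [LinearMap.range_eq_top]
    intro c
    exact ⟨single ⟨0, by omega⟩ ⟨0, by omega⟩ c,
      by simpa using trace_single_eq_same (⟨0, by omega⟩ : Fin m) c⟩
  have hslrank : Module.finrank ℂ sl = m * m - 1 := by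
    have h := (Matrix.traceLinearMap (Fin m) ℂ ℂ).finrank_range_add_finrank_ker
    rw [hsurj] at h
    rw [finrank_top] at h
    rw [Module.finrank_self, Module.finrank_matrix] at h
    simp only [Fintype.card_fin, Module.finrank_self, mul_one] at h
    rw [← hsl] at h
    omega
  have htower : Module.finrank ℝ sl = 2 * (m * m - 1) := by
    rw [← hslrank, ← Complex.finrank_real_complex]
    exact (Module.finrank_mul_finrank ℝ ℂ sl).symm
  -- the linear map (A, B) ↦ A + i B
  let F : (su m × su m) →ₗ[ℝ] Matrix (Fin m) (Fin m) ℂ :=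
    { toFun := fun AB => (AB.1 : Matrix (Fin m) (Fin m) ℂ) + Complex.I • (AB.2 : Matrix (Fin m) (Fin m) ℂ)
      map_add' := by
        intro x y
        simp only [Submodule.coe_add, Prod.fst_add, Prod.snd_add, smul_add]
        abel
      map_smul' := by
        intro r x
        simp only [Prod.smul_fst, Prod.smul_snd, SetLike.val_smul, RingHom.id_apply, smul_add]
        rw [smul_comm r Complex.I] }
  have hinj : Function.Injective F := by
    rw [← LinearMap.ker_eq_bot]
    rw [LinearMap.ker_eq_bot']
    rintro ⟨A, B⟩ hAB
    have hu := skew_unique (mem_su.mp A.2).1 (mem_su.mp B.2).1 hAB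
    ext : 1 <;> simp [Prod.ext_iff]
    · exact Subtype.ext hu.1
    · exact Subtype.ext hu.2
  have hrange : LinearMap.range F = sl.restrictScalars ℝ := by
    ext Y
    constructor
    · rintro ⟨⟨A, B⟩, rfl⟩
      have hA := (mem_su.mp A.2).2
      have hB := (mem_su.mp B.2).2
      simp only [Submodule.restrictScalars_mem, hsl, LinearMap.mem_ker]
      show ((A : Matrix (Fin m) (Fin m) ℂ) + Complex.I • (B : Matrix (Fin m) (Fin m) ℂ)).trace = 0
      rw [trace_add, trace_smul, hA, hB]
      simp
    · intro hY
      have : Y.trace = 0 := hY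
      obtain ⟨A, B, hA, hB, rfl⟩ := sl_decomp Y this
      exact ⟨(⟨A, hA⟩, ⟨B, hB⟩), rfl⟩
  have e1 : Module.finrank ℝ (su m × su m) = Module.finrank ℝ (sl.restrictScalars ℝ) := by
    rw [← hrange]
    exact (LinearEquiv.ofInjective F hinj).finrank_eq
  have e2 : Module.finrank ℝ (sl.restrictScalars ℝ) = Module.finrank ℝ sl := by
    exact LinearEquiv.finrank_eq
      ⟨⟨⟨fun x => ⟨x.1, x.2⟩, fun _ _ => rfl⟩, fun _ _ => rfl⟩, fun x => ⟨x.1, x.2⟩,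
        fun _ => rfl, fun _ => rfl⟩
  rw [Module.finrank_prod, e2, htower] at e1
  omega


variable {r : ℕ} {n : Fin r → ℕ}

abbrev BigM (n : Fin r → ℕ) := Matrix (Σ j : Fin r, Fin (n j)) (Σ j : Fin r, Fin (n j)) ℂ

/-- the j-th diagonal block -/
def blk (j : Fin r) (M : BigM n) : Matrix (Fin (n j)) (Fin (n j)) ℂ := fun a b => M ⟨j, a⟩ ⟨j, b⟩

def blkL (j : Fin r) : BigM n →ₗ[ℝ] Matrix (Fin (n j)) (Fin (n j)) ℂ where
  toFun := blk j
  map_add' := fun _ _ => rfl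
  map_smul' := fun _ _ => rfl

/-- embed a small matrix as the j-th diagonal block -/
def emb (j : Fin r) (Z : Matrix (Fin (n j)) (Fin (n j)) ℂ) : BigM n := fun p q =>
  if h : p.1 = j ∧ q.1 = j then
    Z (Fin.cast (congrArg n h.1) p.2) (Fin.cast (congrArg n h.2) q.2) else 0

lemma emb_apply_same (j : Fin r) (Z : Matrix (Fin (n j)) (Fin (n j)) ℂ) (a b : Fin (n j)) :
    emb j Z ⟨j, a⟩ ⟨j, b⟩ = Z a b := by
  simp [emb]

lemma emb_apply_ne (j : Fin r) (Z : Matrix (Fin (n j)) (Fin (n j)) ℂ) (p q : Σ j : Fin r, Fin (n j))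
    (h : p.1 ≠ j ∨ q.1 ≠ j) : emb j Z p q = 0 := by
  rw [emb, dif_neg]
  rcases h with h | h
  · exact fun hc => h hc.1
  · exact fun hc => h hc.2

lemma blk_emb_same (j : Fin r) (Z : Matrix (Fin (n j)) (Fin (n j)) ℂ) : blk j (emb j Z) = Z := by
  ext a b; exact emb_apply_same j Z a b

lemma blk_emb_ne {j k : Fin r} (h : k ≠ j) (Z : Matrix (Fin (n j)) (Fin (n j)) ℂ) :
    blk k (emb j Z) = 0 := by
  ext a b
  exact emb_apply_ne j Z _ _ (Or.inl h)

lemma emb_zero (j : Fin r) : emb j (0 : Matrix (Fin (n j)) (Fin (n j)) ℂ) = 0 := by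
  ext p q
  by_cases h : p.1 = j ∧ q.1 = j
  · rw [emb, dif_pos h]; rfl
  · rw [emb, dif_neg h]; rfl

/-- block-diagonal predicate -/
def Bd (M : BigM n) : Prop := ∀ p q : Σ j : Fin r, Fin (n j), p.1 ≠ q.1 → M p q = 0

lemma bd_emb (j : Fin r) (Z : Matrix (Fin (n j)) (Fin (n j)) ℂ) : Bd (emb j Z) := by
  intro p q h
  by_cases hp : p.1 = j
  · exact emb_apply_ne j Z p q (Or.inr (fun hq => h (hp.trans hq.symm)))
  · exact emb_apply_ne j Z p q (Or.inl hp)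

lemma bd_decomp {M : BigM n} (h : Bd M) : M = ∑ j : Fin r, emb j (blk j M) := by
  ext p q
  rw [Matrix.sum_apply]
  by_cases hpq : p.1 = q.1
  · rw [Finset.sum_eq_single p.1]
    · obtain ⟨p1, p2⟩ := p
      obtain ⟨q1, q2⟩ := q
      cases hpq
      rw [emb_apply_same]
      rfl
    · intro k _ hk
      exact emb_apply_ne k _ p q (Or.inl (Ne.symm hk))
    · intro hk
      exact absurd (Finset.mem_univ p.1) hk
  · rw [h p q hpq]
    symm
    apply Finset.sum_eq_zero
    intro k _
    by_cases hp : p.1 = k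
    · exact emb_apply_ne k _ p q (Or.inr (fun hq => hpq (hp.trans hq.symm)))
    · exact emb_apply_ne k _ p q (Or.inl hp)

lemma blk_mul {M N : BigM n} (hM : Bd M) (j : Fin r) :
    blk j (M * N) = blk j M * blk j N := by
  ext a b
  show (M * N) ⟨j, a⟩ ⟨j, b⟩ = _
  rw [Matrix.mul_apply, Matrix.mul_apply]
  rw [show (Finset.univ : Finset ((j : Fin r) × Fin (n j))) = Finset.univ.sigma (fun _ => Finset.univ) from rfl,
    Finset.sum_sigma]
  rw [Finset.sum_eq_single j]
  · rfl
  · intro k _ hk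
    apply Finset.sum_eq_zero
    intro c _
    rw [hM ⟨j, a⟩ ⟨k, c⟩ (Ne.symm hk), zero_mul]
  · intro hj
    exact absurd (Finset.mem_univ j) hj

lemma bd_mul {M N : BigM n} (hM : Bd M) (hN : Bd N) : Bd (M * N) := by
  intro p q hpq
  rw [Matrix.mul_apply]
  apply Finset.sum_eq_zero
  intro c _
  by_cases hc : p.1 = c.1
  · rw [hN c q (fun h => hpq (hc.trans h)), mul_zero]
  · rw [hM p c hc, zero_mul]

lemma bd_sub {M N : BigM n} (hM : Bd M) (hN : Bd N) : Bd (M - N) := by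
  intro p q h
  rw [Matrix.sub_apply, hM p q h, hN p q h, sub_zero]

lemma blk_conjTranspose (j : Fin r) (M : BigM n) : blk j (Mᴴ) = (blk j M)ᴴ := rfl

lemma blk_neg (j : Fin r) (M : BigM n) : blk j (-M) = -(blk j M) := rfl

lemma blk_trace (j : Fin r) (M : BigM n) :
    (blk j M).trace = ∑ a : Fin (n j), M ⟨j, a⟩ ⟨j, a⟩ := rfl

/-- uniqueness characterization of emb -/
lemma eq_emb {M : BigM n} (h : Bd M) (j : Fin r) (hblk : ∀ k : Fin r, k ≠ j → blk k M = 0) :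
    M = emb j (blk j M) := by
  have hs : ∑ k : Fin r, emb k (blk k M) = emb j (blk j M) :=
    Finset.sum_eq_single j (fun k _ hk => by rw [hblk k hk, emb_zero])
      (fun hj => absurd (Finset.mem_univ j) hj)
  conv_lhs => rw [bd_decomp h]
  exact hs


variable {ι : Type*} [Fintype ι] [DecidableEq ι]

noncomputable def Bform (ι : Type*) [Fintype ι] : LinearMap.BilinForm ℝ (Matrix ι ι ℂ) :=
  LinearMap.mk₂ ℝ (fun M N => ((Mᴴ * N).trace).re)
    (by intro m1 m2 nn; rw [conjTranspose_add, add_mul, trace_add, Complex.add_re])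
    (by
      intro c mm nn
      rw [conjTranspose_smul, star_trivial, smul_mul_assoc, trace_smul]
      simp [Complex.real_smul])
    (by intro mm n1 n2; rw [mul_add, trace_add, Complex.add_re])
    (by
      intro c mm nn
      rw [mul_smul_comm, trace_smul]
      simp [Complex.real_smul])

lemma Bform_apply (M N : Matrix ι ι ℂ) : Bform ι M N = ((Mᴴ * N).trace).re := rfl

lemma Bform_symm (M N : Matrix ι ι ℂ) : Bform ι M N = Bform ι N M := by
  rw [Bform_apply, Bform_apply]
  have h : Nᴴ * M = (Mᴴ * N)ᴴ := by rw [conjTranspose_mul, conjTranspose_conjTranspose]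
  rw [h, trace_conjTranspose]
  exact (Complex.conj_re _).symm

lemma Bform_refl : (Bform ι).IsRefl := by
  intro M N h
  rw [Bform_symm]
  exact h

lemma Bform_def {M : Matrix ι ι ℂ} (h : Bform ι M M = 0) : M = 0 := by
  rw [Bform_apply] at h
  have hre : (Mᴴ * M).trace.re
      = ∑ i : ι, ∑ k : ι, ((M k i).re * (M k i).re + (M k i).im * (M k i).im) := by
    rw [Matrix.trace, Complex.re_sum]
    refine Finset.sum_congr rfl fun i _ => ?_
    rw [Matrix.diag_apply, Matrix.mul_apply, Complex.re_sum]
    refine Finset.sum_congr rfl fun k _ => ?_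
    rw [Matrix.conjTranspose_apply, Complex.mul_re]
    simp only [Complex.star_def, Complex.conj_re, Complex.conj_im]
    ring
  rw [hre] at h
  have hnn : ∀ i ∈ (Finset.univ : Finset ι),
      (0:ℝ) ≤ ∑ k : ι, ((M k i).re * (M k i).re + (M k i).im * (M k i).im) := by
    intro i _
    apply Finset.sum_nonneg
    intro k _
    nlinarith [sq_nonneg (M k i).re, sq_nonneg (M k i).im]
  ext p q
  have h1 := (Finset.sum_eq_zero_iff_of_nonneg hnn).mp h q (Finset.mem_univ q)
  have hnn2 : ∀ k ∈ (Finset.univ : Finset ι),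
      (0:ℝ) ≤ (M k q).re * (M k q).re + (M k q).im * (M k q).im := by
    intro k _
    nlinarith [sq_nonneg (M k q).re, sq_nonneg (M k q).im]
  have h2 := (Finset.sum_eq_zero_iff_of_nonneg hnn2).mp h1 p (Finset.mem_univ p)
  have hre0 : (M p q).re = 0 := by nlinarith [sq_nonneg (M p q).re, sq_nonneg (M p q).im]
  have him0 : (M p q).im = 0 := by nlinarith [sq_nonneg (M p q).re, sq_nonneg (M p q).im]
  show M p q = 0
  exact Complex.ext hre0 him0

lemma Bform_nondeg_restrict (K : Submodule ℝ (Matrix ι ι ℂ)) :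
    ((Bform ι).restrict K).Nondegenerate := by
  refine (LinearMap.IsRefl.nondegenerate_iff_separatingLeft (B := (Bform ι).restrict K)
    (fun x y h => Bform_refl (x : Matrix ι ι ℂ) y h)).mpr ?_
  intro x hx
  have := hx x
  rw [LinearMap.BilinForm.restrict_apply] at this
  have hx0 : (x : Matrix ι ι ℂ) = 0 := Bform_def this
  exact Subtype.ext hx0

lemma Bform_inv {X M N : Matrix ι ι ℂ} (hX : Xᴴ = -X) :
    Bform ι (X * M - M * X) N = -(Bform ι M (X * N - N * X)) := by
  rw [Bform_apply, Bform_apply]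
  have h1 : (X * M - M * X)ᴴ = Mᴴ * Xᴴ - Xᴴ * Mᴴ := by
    rw [conjTranspose_sub, conjTranspose_mul, conjTranspose_mul]
  rw [h1, hX]
  have h2 : (Mᴴ * (-X) - (-X) * Mᴴ) * N = X * (Mᴴ * N) - Mᴴ * (X * N) := by
    noncomm_ring
  rw [h2]
  have h3 : (X * (Mᴴ * N)).trace = (Mᴴ * (N * X)).trace := by
    rw [trace_mul_comm, mul_assoc]
  rw [trace_sub, h3, mul_sub, trace_sub]
  simp only [Complex.sub_re, Complex.neg_re]
  ring


end Stmt13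
namespace Stmt13

variable {r : ℕ} {n : Fin r → ℕ}

lemma su_bracket {m : ℕ} {X Y : Matrix (Fin m) (Fin m) ℂ} (hX : X ∈ su m) (hY : Y ∈ su m) :
    X * Y - Y * X ∈ su m := by
  obtain ⟨hX1, hX2⟩ := hX
  obtain ⟨hY1, hY2⟩ := hY
  constructor
  · rw [conjTranspose_sub, conjTranspose_mul, conjTranspose_mul, hX1, hY1]
    simp only [Matrix.neg_mul, Matrix.mul_neg, neg_neg]
    rw [neg_sub]
  · rw [trace_sub, trace_mul_comm, sub_self]

noncomputable def zbS (j : Fin r) : Submodule ℝ (BigM n) where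
  carrier := {M | ∀ i : Fin r, i < j → blk i M = 0}
  add_mem' := by
    intro a b ha hb i hi
    show blk i (a + b) = 0
    have h : blk i (a + b) = blk i a + blk i b := rfl
    rw [h, ha i hi, hb i hi, add_zero]
  zero_mem' := by intro i hi; rfl
  smul_mem' := by
    intro c x hx i hi
    show blk i (c • x) = 0
    have h : blk i (c • x) = c • blk i x := rfl
    rw [h, hx i hi, smul_zero]

lemma emb_mem (r : ℕ) (n : Fin r → ℕ) (hmono : StrictAnti n) (hpos : ∀ j, 1 ≤ n j)
    (R : LieSubalgebra ℝ (BigM n))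
    (hblock : ∀ M ∈ R, Mᴴ = -M ∧
      (∀ (j k : Fin r) (a : Fin (n j)) (b : Fin (n k)), j ≠ k → M ⟨j, a⟩ ⟨k, b⟩ = 0) ∧
      (∀ j : Fin r, (∑ a : Fin (n j), M ⟨j, a⟩ ⟨j, a⟩) = 0))
    (hweak : ∀ (j : Fin r) (Z : Matrix (Fin (n j)) (Fin (n j)) ℂ),
      Zᴴ = -Z → Z.trace = 0 → ∃ M ∈ R, ∀ a b : Fin (n j), M ⟨j, a⟩ ⟨j, b⟩ = Z a b) :
    ∀ j : Fin r, ∀ Z ∈ su (n j), emb j Z ∈ R := by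
  have hbd : ∀ M ∈ R, Bd M := by
    rintro M hM ⟨p1, p2⟩ ⟨q1, q2⟩ h
    exact (hblock M hM).2.1 p1 q1 p2 q2 h
  have hblk_su : ∀ M ∈ R, ∀ k : Fin r, blk k M ∈ su (n k) := by
    intro M hM k
    refine ⟨?_, ?_⟩
    · rw [← blk_conjTranspose, (hblock M hM).1, blk_neg]
    · rw [blk_trace]; exact (hblock M hM).2.2 k
  have hbr_blk : ∀ M N : BigM n, Bd M → Bd N → ∀ i : Fin r,
      blk i (M * N - N * M) = blk i M * blk i N - blk i N * blk i M := by
    intro M N hM hN i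
    have h : blk i (M * N - N * M) = blk i (M * N) - blk i (N * M) := rfl
    rw [h, blk_mul hM, blk_mul hN]
  suffices h : ∀ (N : ℕ) (j : Fin r), j.val < N → ∀ Z ∈ su (n j), emb j Z ∈ R by
    intro j; exact h (j.val + 1) j (Nat.lt_succ_self _)
  intro N
  induction N with
  | zero => intro j hj; omega
  | succ N IHN =>
    intro j hjN Z hZ
    have IH : ∀ i : Fin r, i < j → ∀ Z' ∈ su (n i), emb i Z' ∈ R := by
      intro i hi
      exact IHN i (by omega)
    rcases Nat.lt_or_ge (n j) 2 with hnj | hnj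
    · -- n j = 1, so Z = 0
      have hZ0 : Z = 0 := by
        have hab : ∀ x y : Fin (n j), x = y := by
          intro x y
          have hx := x.2; have hy := y.2
          apply Fin.ext; omega
        ext a b
        have htr := hZ.2
        rw [Matrix.trace] at htr
        have hall : ∀ c : Fin (n j), Z.diag c = Z a a := fun c => by
          rw [Matrix.diag_apply, hab c a]
        rw [Finset.sum_congr rfl (fun c _ => hall c), Finset.sum_const, Finset.card_univ,
          Fintype.card_fin] at htr
        have h1 : n j = 1 := by have := hpos j; omega
        rw [h1, one_smul] at htr
        rw [show b = a from hab b a]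
        exact htr
      rw [hZ0, emb_zero]
      exact R.zero_mem
    · -- main case : 2 ≤ n j
      set S : Submodule ℝ (BigM n) := (R : Submodule ℝ (BigM n)) ⊓ zbS j with hSdef
      set K : Submodule ℝ (BigM n) := S ⊓ LinearMap.ker (blkL j) with hKdef
      set P : Submodule ℝ (BigM n) := S ⊓ (Bform _).orthogonal K with hPdef
      have hmemS : ∀ M : BigM n, M ∈ S ↔ (M ∈ R ∧ ∀ i : Fin r, i < j → blk i M = 0) := by
        intro M
        rw [hSdef, Submodule.mem_inf, LieSubalgebra.mem_toSubmodule _]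
        rfl
      have hSR : ∀ M ∈ S, M ∈ R := fun M hM => ((hmemS M).mp hM).1
      have hmemK : ∀ M : BigM n, M ∈ K ↔ M ∈ S ∧ blk j M = 0 := by
        intro M
        rw [hKdef, Submodule.mem_inf, LinearMap.mem_ker]
        rfl
      have hmemP : ∀ M : BigM n, M ∈ P ↔ M ∈ S ∧ ∀ N ∈ K, Bform _ N M = 0 := by
        intro M
        rw [hPdef, Submodule.mem_inf, LinearMap.BilinForm.mem_orthogonal_iff]
      have hSsurj : ∀ Z' ∈ su (n j), ∃ M ∈ S, blk j M = Z' := by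
        intro Z' hZ'
        obtain ⟨M₀, hM₀R, hM₀blk⟩ := hweak j Z' hZ'.1 hZ'.2
        have hM₀blk' : blk j M₀ = Z' := by ext a b; exact hM₀blk a b
        set D : BigM n := ∑ i ∈ Finset.univ.filter (fun i : Fin r => i < j),
          emb i (blk i M₀) with hDdef
        have hDR : D ∈ (R : Submodule ℝ (BigM n)) := by
          apply Submodule.sum_mem
          intro i hi
          exact (LieSubalgebra.mem_toSubmodule _).mpr
            (IH i (Finset.mem_filter.mp hi).2 _ (hblk_su M₀ hM₀R i))
        have hblkD : ∀ i' : Fin r, blk i' D = if i' < j then blk i' M₀ else 0 := by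
          intro i'
          have hsum : blk i' D = ∑ i ∈ Finset.univ.filter (fun i : Fin r => i < j),
              blk i' (emb i (blk i M₀)) := by
            rw [hDdef]
            exact map_sum (blkL i') (fun i => emb i (blk i M₀))
              (Finset.univ.filter (fun i : Fin r => i < j))
          rw [hsum]
          by_cases hij : i' < j
          · have hmemi : i' ∈ Finset.univ.filter (fun i : Fin r => i < j) :=
              Finset.mem_filter.mpr ⟨Finset.mem_univ _, hij⟩
            rw [Finset.sum_eq_single_of_mem i' hmemi
              (fun k _ hki => blk_emb_ne (Ne.symm hki) _)]
            rw [blk_emb_same, if_pos hij]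
          · rw [if_neg hij]
            apply Finset.sum_eq_zero
            intro k hk
            have hkj : k < j := (Finset.mem_filter.mp hk).2
            exact blk_emb_ne (fun he => hij (by rw [he]; exact hkj)) _
        refine ⟨M₀ - D, (hmemS _).mpr ⟨?_, ?_⟩, ?_⟩
        · have hsub : M₀ - D ∈ (R : Submodule ℝ (BigM n)) :=
            Submodule.sub_mem _ ((LieSubalgebra.mem_toSubmodule _).mpr hM₀R) hDR
          exact (LieSubalgebra.mem_toSubmodule _).mp hsub
        · intro i hi
          have h : blk i (M₀ - D) = blk i M₀ - blk i D := rfl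
          rw [h, hblkD i, if_pos hi, sub_self]
        · have h : blk j (M₀ - D) = blk j M₀ - blk j D := rfl
          rw [h, hblkD j, if_neg (lt_irrefl j), sub_zero, hM₀blk']
      have hSbr : ∀ M ∈ S, ∀ N ∈ S, M * N - N * M ∈ S := by
        intro M hM N hN
        obtain ⟨hMR, hMz⟩ := (hmemS M).mp hM
        obtain ⟨hNR, hNz⟩ := (hmemS N).mp hN
        have hRbr : M * N - N * M ∈ R := by
          have hlie := R.lie_mem hMR hNR
          rwa [Ring.lie_def] at hlie
        refine (hmemS _).mpr ⟨hRbr, ?_⟩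
        intro i hi
        rw [hbr_blk M N (hbd M hMR) (hbd N hNR) i, hMz i hi, hNz i hi]
        simp
      have hKbr : ∀ M ∈ S, ∀ k ∈ K, M * k - k * M ∈ K := by
        intro M hM k hk
        obtain ⟨hkS, hkj⟩ := (hmemK k).mp hk
        refine (hmemK _).mpr ⟨hSbr M hM k hkS, ?_⟩
        rw [hbr_blk _ _ (hbd M (hSR M hM)) (hbd k (hSR k hkS)) j, hkj]
        simp
      have hPbr : ∀ p ∈ P, ∀ p' ∈ P, p * p' - p' * p ∈ P := by
        intro p hp p' hp'
        obtain ⟨hpS, hpO⟩ := (hmemP p).mp hp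
        obtain ⟨hp'S, hp'O⟩ := (hmemP p').mp hp'
        refine (hmemP _).mpr ⟨hSbr p hpS p' hp'S, ?_⟩
        intro N hN
        have hskewp : pᴴ = -p := (hblock p (hSR p hpS)).1
        rw [Bform_symm, Bform_inv hskewp, Bform_symm,
          hp'O _ (hKbr p hpS N hN), neg_zero]
      have hPinj : ∀ p ∈ P, blk j p = 0 → p = 0 := by
        intro p hp h0
        obtain ⟨hpS, hpO⟩ := (hmemP p).mp hp
        have hpK : p ∈ K := (hmemK p).mpr ⟨hpS, h0⟩
        exact Bform_def (hpO p hpK)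
      have hdecomp : ∀ M ∈ S, ∃ k ∈ K, ∃ p ∈ P, M = k + p := by
        have hcompl := (Bform _).isCompl_orthogonal_of_restrict_nondegenerate Bform_refl
          (Bform_nondeg_restrict K)
        intro M hM
        have hMtop : M ∈ K ⊔ (Bform _).orthogonal K := by
          rw [hcompl.sup_eq_top]; trivial
        obtain ⟨k, hk, p', hp', hkp⟩ := Submodule.mem_sup.mp hMtop
        have hp'S : p' ∈ S := by
          have heq : p' = M - k := by rw [← hkp]; abel
          rw [heq]
          exact S.sub_mem hM ((hmemK k).mp hk).1
        refine ⟨k, hk, p', (hmemP p').mpr ⟨hp'S, ?_⟩, hkp.symm⟩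
        intro N hN
        exact LinearMap.BilinForm.mem_orthogonal_iff.mp hp' N hN
      -- the section E of blk j with values in P
      let πP' : ↥P →ₗ[ℝ] ↥(su (n j)) := LinearMap.codRestrict (su (n j))
        ((blkL j).comp P.subtype)
        (fun x => hblk_su x.1 (hSR x.1 ((hmemP x.1).mp x.2).1) j)
      have hπinj : Function.Injective πP' := by
        intro x y hxy
        have h1 : blk j (x : BigM n) = blk j (y : BigM n) := congrArg Subtype.val hxy
        have h0 : blk j ((x : BigM n) - (y : BigM n)) = 0 := by
          have h : blk j ((x : BigM n) - (y : BigM n))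
              = blk j (x : BigM n) - blk j (y : BigM n) := rfl
          rw [h, h1, sub_self]
        have hxy' : (x : BigM n) - (y : BigM n) ∈ P := P.sub_mem x.2 y.2
        have hz := hPinj _ hxy' h0
        exact Subtype.ext (by rwa [sub_eq_zero] at hz)
      have hπsurj : Function.Surjective πP' := by
        rintro ⟨Z', hZ'⟩
        obtain ⟨M, hMS, hMblk⟩ := hSsurj Z' hZ'
        obtain ⟨k, hk, p, hp, rfl⟩ := hdecomp M hMS
        refine ⟨⟨p, hp⟩, ?_⟩
        apply Subtype.ext
        show blk j p = Z'
        have hkj : blk j k = 0 := ((hmemK k).mp hk).2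
        have h : blk j (k + p) = blk j k + blk j p := rfl
        rw [h, hkj, zero_add] at hMblk
        exact hMblk
      let e := LinearEquiv.ofBijective πP' ⟨hπinj, hπsurj⟩
      let E : ↥(su (n j)) →ₗ[ℝ] BigM n := P.subtype.comp (e.symm : ↥(su (n j)) →ₗ[ℝ] ↥P)
      have hE_P : ∀ Z' : ↥(su (n j)), E Z' ∈ P := fun Z' => (e.symm Z').2
      have hE_blk : ∀ Z' : ↥(su (n j)), blk j (E Z') = Z' := by
        intro Z'
        exact congrArg Subtype.val (e.apply_symm_apply Z')
      have hE_S : ∀ Z' : ↥(su (n j)), E Z' ∈ S := fun Z' => ((hmemP _).mp (hE_P Z')).1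
      have hE_R : ∀ Z' : ↥(su (n j)), E Z' ∈ R := fun Z' => hSR _ (hE_S Z')
      have hEbr : ∀ Z1 Z2 : ↥(su (n j)),
          E ⟨Z1.1 * Z2.1 - Z2.1 * Z1.1, su_bracket Z1.2 Z2.2⟩
            = E Z1 * E Z2 - E Z2 * E Z1 := by
        intro Z1 Z2
        have hL : E Z1 * E Z2 - E Z2 * E Z1 ∈ P := hPbr _ (hE_P Z1) _ (hE_P Z2)
        have hdiff : E ⟨Z1.1 * Z2.1 - Z2.1 * Z1.1, su_bracket Z1.2 Z2.2⟩
            - (E Z1 * E Z2 - E Z2 * E Z1) ∈ P := P.sub_mem (hE_P _) hL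
        have hblk0 : blk j (E ⟨Z1.1 * Z2.1 - Z2.1 * Z1.1, su_bracket Z1.2 Z2.2⟩
            - (E Z1 * E Z2 - E Z2 * E Z1)) = 0 := by
          have h2 : blk j (E Z1 * E Z2 - E Z2 * E Z1)
              = blk j (E Z1) * blk j (E Z2) - blk j (E Z2) * blk j (E Z1) :=
            hbr_blk _ _ (hbd _ (hE_R Z1)) (hbd _ (hE_R Z2)) j
          have h : blk j (E ⟨Z1.1 * Z2.1 - Z2.1 * Z1.1, su_bracket Z1.2 Z2.2⟩
              - (E Z1 * E Z2 - E Z2 * E Z1))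
              = blk j (E ⟨Z1.1 * Z2.1 - Z2.1 * Z1.1, su_bracket Z1.2 Z2.2⟩)
                - blk j (E Z1 * E Z2 - E Z2 * E Z1) := rfl
          rw [h, h2, hE_blk, hE_blk, hE_blk]
          simp
        have h0 := hPinj _ hdiff hblk0
        exact sub_eq_zero.mp h0
      -- vanishing of the later blocks
      have hgt : ∀ k : Fin r, j < k → ∀ Z' : ↥(su (n j)), blk k (E Z') = 0 := by
        intro k hk
        set φ : ↥(su (n j)) →ₗ[ℝ] Matrix (Fin (n k)) (Fin (n k)) ℂ := (blkL k).comp E with hφdef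
        have hφsu : ∀ Z' : ↥(su (n j)), φ Z' ∈ su (n k) := fun Z' => hblk_su _ (hE_R Z') k
        have hφbr : ∀ Z1 Z2 : ↥(su (n j)),
            φ ⟨Z1.1 * Z2.1 - Z2.1 * Z1.1, su_bracket Z1.2 Z2.2⟩
              = φ Z1 * φ Z2 - φ Z2 * φ Z1 := by
          intro Z1 Z2
          show blk k (E ⟨Z1.1 * Z2.1 - Z2.1 * Z1.1, su_bracket Z1.2 Z2.2⟩) = _
          rw [hEbr Z1 Z2]
          exact hbr_blk _ _ (hbd _ (hE_R Z1)) (hbd _ (hE_R Z2)) k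
        by_cases hker : ∃ Z0 : ↥(su (n j)), φ Z0 = 0 ∧ Z0 ≠ 0
        · obtain ⟨Z0, hZ0ker, hZ0ne⟩ := hker
          set Ik : Submodule ℝ (Matrix (Fin (n j)) (Fin (n j)) ℂ) :=
            Submodule.map (su (n j)).subtype (LinearMap.ker φ) with hIkdef
          have hIk_mem : ∀ X : Matrix (Fin (n j)) (Fin (n j)) ℂ,
              X ∈ Ik ↔ ∃ hX : X ∈ su (n j), φ ⟨X, hX⟩ = 0 := by
            intro X
            constructor
            · rintro ⟨⟨x, hx⟩, hker', rfl⟩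
              exact ⟨hx, hker'⟩
            · rintro ⟨hX, h0⟩
              exact ⟨⟨X, hX⟩, h0, rfl⟩
          have hIk_su : ∀ X ∈ Ik, X ∈ su (n j) := by
            intro X hX
            obtain ⟨h, _⟩ := (hIk_mem X).mp hX
            exact h
          have hIk_ideal : ∀ Y ∈ su (n j), ∀ X ∈ Ik, Y * X - X * Y ∈ Ik := by
            intro Y hY X hX
            obtain ⟨hXsu, hX0⟩ := (hIk_mem X).mp hX
            refine (hIk_mem _).mpr ⟨su_bracket hY hXsu, ?_⟩
            have hb := hφbr ⟨Y, hY⟩ ⟨X, hXsu⟩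
            rw [hX0] at hb
            simpa using hb
          have hX0Ik : (Z0 : Matrix (Fin (n j)) (Fin (n j)) ℂ) ∈ Ik :=
            (hIk_mem _).mpr ⟨Z0.2, by rw [Subtype.coe_eta]; exact hZ0ker⟩
          have hX0ne : (Z0 : Matrix (Fin (n j)) (Fin (n j)) ℂ) ≠ 0 :=
            fun h => hZ0ne (Subtype.ext h)
          have hall := su_simple hnj Ik hIk_su hIk_ideal hX0Ik hX0ne
          intro Z'
          obtain ⟨hsu', h0⟩ := (hIk_mem Z'.1).mp (hall Z'.1 Z'.2)
          have heta : (⟨Z'.1, hsu'⟩ : ↥(su (n j))) = Z' := Subtype.coe_eta _ _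
          rw [heta] at h0
          exact h0
        · exfalso
          push_neg at hker
          have hinj : Function.Injective φ := by
            intro x y hxy
            have h0 : φ (x - y) = 0 := by rw [map_sub, hxy, sub_self]
            have := hker _ h0
            rwa [sub_eq_zero] at this
          let φ' : ↥(su (n j)) →ₗ[ℝ] ↥(su (n k)) :=
            LinearMap.codRestrict (su (n k)) φ hφsu
          have hinj' : Function.Injective φ' := by
            intro x y h
            exact hinj (congrArg Subtype.val h)
          have hle := LinearMap.finrank_le_finrank_of_injective hinj'
          rw [finrank_su (hpos j), finrank_su (hpos k)] at hle
          have hlt : n k < n j := hmono hk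
          have hsq : n k * n k < n j * n j :=
            Nat.mul_lt_mul_of_lt_of_le hlt (le_of_lt hlt) (by omega)
          have ha : 4 ≤ n j * n j := Nat.mul_le_mul hnj hnj
          omega
      -- conclusion
      have hblks : ∀ k : Fin r, k ≠ j → blk k (E ⟨Z, hZ⟩) = 0 := by
        intro k hkj
        rcases lt_trichotomy k j with h | h | h
        · exact ((hmemS _).mp (hE_S ⟨Z, hZ⟩)).2 k h
        · exact absurd h hkj
        · exact hgt k h ⟨Z, hZ⟩
      have heq : emb j Z = E ⟨Z, hZ⟩ := by
        have h1 : E ⟨Z, hZ⟩ = emb j (blk j (E ⟨Z, hZ⟩)) :=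
          eq_emb (hbd _ (hE_R ⟨Z, hZ⟩)) j hblks
        rw [hE_blk ⟨Z, hZ⟩] at h1
        exact h1.symm
      rw [heq]
      exact hE_R ⟨Z, hZ⟩

end Stmt13

open Stmt13 in
/-- let n₁ > n₂ > ⋯ > n_r ≥ 1 be pairwise distinct block sizes and R a
Lie subalgebra of the block-diagonal algebra ⊕_j su(n_j) (block-diagonal skew-Hermitian
matrices with each diagonal block traceless).  If the projection of R onto every block
su(n_j) is surjective (weak subspace controllability), then R is the whole direct sum. -/
theorem stmt13 (r : ℕ) (n : Fin r → ℕ) (hmono : StrictAnti n) (hpos : ∀ j, 1 ≤ n j)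
    (R : LieSubalgebra ℝ (Matrix (Σ j : Fin r, Fin (n j)) (Σ j : Fin r, Fin (n j)) ℂ))
    (hblock : ∀ M ∈ R,
      Mᴴ = -M ∧
      (∀ (j k : Fin r) (a : Fin (n j)) (b : Fin (n k)), j ≠ k → M ⟨j, a⟩ ⟨k, b⟩ = 0) ∧
      (∀ j : Fin r, (∑ a : Fin (n j), M ⟨j, a⟩ ⟨j, a⟩) = 0))
    (hweak : ∀ (j : Fin r) (Z : Matrix (Fin (n j)) (Fin (n j)) ℂ),
      Zᴴ = -Z → Z.trace = 0 →
      ∃ M ∈ R, ∀ a b : Fin (n j), M ⟨j, a⟩ ⟨j, b⟩ = Z a b) :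
    (R : Set (Matrix (Σ j : Fin r, Fin (n j)) (Σ j : Fin r, Fin (n j)) ℂ)) =
      {M | Mᴴ = -M ∧
        (∀ (j k : Fin r) (a : Fin (n j)) (b : Fin (n k)), j ≠ k → M ⟨j, a⟩ ⟨k, b⟩ = 0) ∧
        (∀ j : Fin r, (∑ a : Fin (n j), M ⟨j, a⟩ ⟨j, a⟩) = 0)} := by
  apply Set.eq_of_subset_of_subset
  · intro M hM
    exact hblock M hM
  · intro M hM
    obtain ⟨h1, h2, h3⟩ := hM
    have hbdM : Bd (M : BigM n) := by
      rintro ⟨p1, p2⟩ ⟨q1, q2⟩ h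
      exact h2 p1 q1 p2 q2 h
    have hmem : ∀ jj : Fin r, emb jj (blk jj M) ∈ R := by
      intro jj
      apply emb_mem r n hmono hpos R hblock hweak jj
      refine ⟨?_, ?_⟩
      · rw [← blk_conjTranspose, h1, blk_neg]
      · rw [blk_trace]
        exact h3 jj
    have hsum : ∑ jj : Fin r, emb jj (blk jj M) ∈ (R : Submodule ℝ (BigM n)) :=
      Submodule.sum_mem _ (fun jj _ => (LieSubalgebra.mem_toSubmodule _).mpr (hmem jj))
    have hfin : M ∈ R := by
      rw [show M = ∑ jj : Fin r, emb jj (blk jj M) from bd_decomp hbdM]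
      exact (LieSubalgebra.mem_toSubmodule _).mp hsum
    exact hfin
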